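/- arXiv:1204.2456 — 2 statements merged into one kernel-verified Lean document; each statement's English description precedes it below -/
import Mathlib

section
/- Let (R, m) be a commutative Noetherian local ring and M a finitely generated R-module which has a rank. If rank(M) equals μ(M), the minimal number of generators of M, then M is a free R-module. -/
noncomputable section

open IsLocalRing CategoryTheory TensorProduct

/-- The length of a module: supremum of lengths of strictly increasing chains of submodules. -/
noncomputable def mLength (R M : Type) [CommRing R] [AddCommGroup M] [Module R M] : ℕ∞ :=
  ⨆ (c : LTSeries (Submodule R M)), (c.length : ℕ∞)

/-- The depth of a module over a local ring: supremum of lengths of regular sequences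
contained in the maximal ideal. -/
noncomputable def mDepth (R : Type) [CommRing R] [IsLocalRing R]
    (M : Type) [AddCommGroup M] [Module R M] : ℕ∞ :=
  sSup {n : ℕ∞ | ∃ rs : List R, (rs.length : ℕ∞) = n ∧ (∀ r ∈ rs, r ∈ maximalIdeal R) ∧
    RingTheory.Sequence.IsRegular M rs}

/-- The (Krull) dimension of a module: the Krull dimension of `R ⧸ ann M`. -/
noncomputable def mDim (R : Type) [CommRing R] (M : Type) [AddCommGroup M] [Module R M] :
    WithBot ℕ∞ :=
  ringKrullDim (R ⧸ Module.annihilator R M)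

/-- A Cohen-Macaulay local ring: `depth R = dim R`. -/
def IsCMLocalRing (R : Type) [CommRing R] [IsLocalRing R] : Prop :=
  (mDepth R R : WithBot ℕ∞) = ringKrullDim R

/-- A maximal Cohen-Macaulay module: `depth M = dim R`. -/
def IsMCM (R : Type) [CommRing R] [IsLocalRing R] (M : Type) [AddCommGroup M] [Module R M] :
    Prop :=
  (mDepth R M : WithBot ℕ∞) = ringKrullDim R

/-- `M` has a rank: its localization at the set of nonzerodivisors is free. -/
def HasRank (R : Type) [CommRing R] (M : Type) [AddCommGroup M] [Module R M] : Prop :=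
  Module.Free (Localization (nonZeroDivisors R)) (LocalizedModule (nonZeroDivisors R) M)

/-- The rank of a module: the rank of its localization at the nonzerodivisors. -/
noncomputable def modRank (R : Type) [CommRing R] (M : Type) [AddCommGroup M] [Module R M] : ℕ :=
  Module.finrank (Localization (nonZeroDivisors R)) (LocalizedModule (nonZeroDivisors R) M)

/-- Minimal number of generators. -/
noncomputable def mu (R : Type) [CommRing R] (M : Type) [AddCommGroup M] [Module R M] : ℕ :=
  sInf {n | ∃ s : Finset M, s.card = n ∧ Submodule.span R (s : Set M) = ⊤}

/-- `x` is a (full) system of parameters for `R`. -/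
def IsSOP (R : Type) [CommRing R] [IsLocalRing R] {d : ℕ} (x : Fin d → R) : Prop :=
  ((d : ℕ∞) : WithBot ℕ∞) = ringKrullDim R ∧ (∀ i, x i ∈ maximalIdeal R) ∧
    IsFiniteLength R (R ⧸ Ideal.span (Set.range x))

/-- The Frobenius power `I^{[q]}` of an ideal. -/
def frobPow {R : Type} [CommRing R] (I : Ideal R) (q : ℕ) : Ideal R :=
  Ideal.span ((fun a => a ^ q) '' (I : Set R))

/-- The invariant `κ(R)`. -/
noncomputable def kappa (R : Type) [CommRing R] [IsLocalRing R] (p : ℕ) : ℕ :=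
  sInf {t : ℕ | ∃ (d : ℕ) (x : Fin d → R), IsSOP R x ∧
    frobPow (maximalIdeal R) (p ^ t) ≤ Ideal.span (Set.range x)}

/-- `R` viewed as an `R`-module via the `n`-th iterated Frobenius, i.e. `{}^{f^n}R`. -/
def FrobTwist (R : Type) (p n : ℕ) : Type := R

instance (R : Type) [CommRing R] (p n : ℕ) : CommRing (FrobTwist R p n) :=
  inferInstanceAs (CommRing R)

instance (R : Type) [CommRing R] (p n : ℕ) [ExpChar R p] : Algebra R (FrobTwist R p n) :=
  RingHom.toAlgebra (iterateFrobenius R p n)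

/-- The Peskine-Szpiro Frobenius functor `F^n(M) = M ⊗_R {}^{f^n}R`, with `R`-module
structure coming from the right-hand (untwisted) factor. -/
def FrobF (R : Type) [CommRing R] (p n : ℕ) [ExpChar R p]
    (M : Type) [AddCommGroup M] [Module R M] : Type :=
  FrobTwist R p n ⊗[R] M

instance (R : Type) [CommRing R] (p n : ℕ) [ExpChar R p]
    (M : Type) [AddCommGroup M] [Module R M] : AddCommGroup (FrobF R p n M) :=
  inferInstanceAs (AddCommGroup (FrobTwist R p n ⊗[R] M))

instance (R : Type) [CommRing R] (p n : ℕ) [ExpChar R p]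
    (M : Type) [AddCommGroup M] [Module R M] : Module R (FrobF R p n M) :=
  inferInstanceAs (Module (FrobTwist R p n) (FrobTwist R p n ⊗[R] M))

/-- `Tor_i^R(M, N)` as an object of `ModuleCat R`. -/
noncomputable def TorQ (R : Type) [CommRing R] (i : ℕ)
    (M : Type) [AddCommGroup M] [Module R M] (N : Type) [AddCommGroup N] [Module R N] :
    ModuleCat R :=
  ((Tor (ModuleCat R) i).obj (ModuleCat.of R M)).obj (ModuleCat.of R N)

/-- `Ext_R^i(M, N)` as an object of `ModuleCat R`. -/
noncomputable def ExtQ (R : Type) [CommRing R] (i : ℕ)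
    (M : Type) [AddCommGroup M] [Module R M] (N : Type) [AddCommGroup N] [Module R N] :
    ModuleCat R :=
  ((Ext R (ModuleCat R) i).obj (Opposite.op (ModuleCat.of R M))).obj (ModuleCat.of R N)

/-- `M` has finite projective dimension, characterized by eventual vanishing of `Ext`. -/
def HasFinProjDim (R : Type) [CommRing R] (M : Type) [AddCommGroup M] [Module R M] : Prop :=
  ∃ n : ℕ, ∀ (N : Type) [AddCommGroup N] [Module R N], Limits.IsZero (ExtQ R (n + 1) M N)

/-- `ω` is a canonical module of the local ring `R`:
`Ext^i(k, ω) = 0` for `i ≠ d = dim R` and `Ext^d(k, ω) ≅ k`. -/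
def IsCanonicalModule (R : Type) [CommRing R] [IsLocalRing R]
    (ω : Type) [AddCommGroup ω] [Module R ω] : Prop :=
  Module.Finite R ω ∧ ∃ d : ℕ, ((d : ℕ∞) : WithBot ℕ∞) = ringKrullDim R ∧
    (∀ i : ℕ, i ≠ d → Limits.IsZero (ExtQ R i (ResidueField R) ω)) ∧
    Nonempty ((ExtQ R d (ResidueField R) ω) ≅ ModuleCat.of R (ResidueField R))

/-- A Gorenstein local ring: `R` is a canonical module of itself. -/
def IsGorensteinLocalRing (R : Type) [CommRing R] [IsLocalRing R] : Prop :=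
  IsCanonicalModule R R

/-- A generically Gorenstein ring: the localization at every minimal prime is Gorenstein. -/
def IsGenericallyGorenstein (R : Type) [CommRing R] : Prop :=
  ∀ (P : Ideal R) [P.IsPrime], P ∈ minimalPrimes R →
    IsGorensteinLocalRing (Localization.AtPrime P)

/-- Over a Noetherian local ring, a finitely generated module with a rank
whose rank equals its minimal number of generators is free. -/
theorem stmt_0 (R : Type) [CommRing R] [IsNoetherianRing R] [IsLocalRing R]
    (M : Type) [AddCommGroup M] [Module R M] [Module.Finite R M]
    (hrk : HasRank R M) (h : modRank R M = mu R M) :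
    Module.Free R M := by
  classical
  have hrk' : Module.Free (Localization (nonZeroDivisors R))
      (LocalizedModule (nonZeroDivisors R) M) := hrk
  -- choose a minimal generating set
  have hne : {n | ∃ s : Finset M, s.card = n ∧ Submodule.span R (s : Set M) = ⊤}.Nonempty := by
    obtain ⟨s, hs⟩ := Module.Finite.fg_top (R := R) (M := M)
    exact ⟨s.card, s, rfl, hs⟩
  obtain ⟨s, hcard, hspan⟩ := Nat.sInf_mem hne
  set S := nonZeroDivisors R
  set Rₛ := Localization S
  have hnontriv : Nontrivial Rₛ := inferInstance
  let F := (↥s → R)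
  let f : F →ₗ[R] M := Fintype.linearCombination R (Subtype.val : ↥s → M)
  have hsurj : Function.Surjective f := by
    rw [← LinearMap.range_eq_top, Fintype.range_linearCombination,
      Subtype.range_coe_subtype, Finset.setOf_mem, hspan]
  let fF := LocalizedModule.mkLinearMap S F
  let fM := LocalizedModule.mkLinearMap S M
  let g : LocalizedModule S F →ₗ[R] LocalizedModule S M := IsLocalizedModule.map S fF fM f
  have hgsurj : Function.Surjective g := IsLocalizedModule.map_surjective S fF fM f hsurj
  let g' : LocalizedModule S F →ₗ[Rₛ] LocalizedModule S M :=
    LinearMap.extendScalarsOfIsLocalization S Rₛ g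
  have hg'surj : Function.Surjective g' := hgsurj
  have hFfree : Module.Free Rₛ (LocalizedModule S F) := Module.free_of_isLocalizedModule S fF
  have hFfin : Module.Finite Rₛ (LocalizedModule S F) :=
    Module.Finite.equiv (IsLocalizedModule.isBaseChange S Rₛ fF).equiv
  have hMfin : Module.Finite Rₛ (LocalizedModule S M) :=
    Module.Finite.of_surjective g' hg'surj
  have hfrF : Module.finrank Rₛ (LocalizedModule S F) = s.card := by
    rw [Module.finrank_of_isLocalizedModule_of_free Rₛ S fF]
    simp [F, Module.finrank_pi]
  have hfr : Module.finrank Rₛ (LocalizedModule S M)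
      = Module.finrank Rₛ (LocalizedModule S F) := by
    rw [hfrF, hcard]
    exact h
  let e : LocalizedModule S M ≃ₗ[Rₛ] LocalizedModule S F :=
    LinearEquiv.ofFinrankEq _ _ hfr
  have hendo : Function.Surjective (e.toLinearMap ∘ₗ g') :=
    e.surjective.comp hg'surj
  have hendoinj : Function.Injective (e.toLinearMap ∘ₗ g') :=
    OrzechProperty.injective_of_surjective_endomorphism _ hendo
  have hg'inj : Function.Injective g' := by
    intro a b hab
    exact hendoinj (by simp [LinearMap.comp_apply, hab])
  have hfinj : Function.Injective f := by
    rw [injective_iff_map_eq_zero]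
    intro v hv
    have h1 : g (fF v) = 0 := by
      rw [IsLocalizedModule.map_apply, hv, map_zero]
    have h2 : fF v = fF 0 := by
      have : g' (fF v) = g' (fF 0) := by rw [map_zero, map_zero]; exact h1
      exact hg'inj this
    obtain ⟨c, hc⟩ := IsLocalizedModule.exists_of_eq (S := S) (f := fF) h2
    rw [smul_zero] at hc
    funext i
    have hvi : (c : R) * v i = 0 := congrFun hc i
    exact c.2.2 (v i) (by rw [mul_comm]; exact hvi)
  exact Module.Free.of_equiv (LinearEquiv.ofBijective f ⟨hfinj, hsurj⟩)


end
end

section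
/- Let R be a Noetherian local ring and let x = x_1, ..., x_d be an R-regular sequence such that R/(x) has finite length. Then for any positive integers a_1, ..., a_d, ℓ(R/(x_1^{a_1}, ..., x_d^{a_d})) = a_1 ⋯ a_d · ℓ(R/(x_1, ..., x_d)). In particular, for any q, ℓ(R/(x_1^q, ..., x_d^q)) = q^d · ℓ(R/(x)). -/
noncomputable section

open IsLocalRing CategoryTheory TensorProduct

section LengthTheory

variable {R M M₂ : Type} [CommRing R] [AddCommGroup M] [Module R M]
  [AddCommGroup M₂] [Module R M₂]

lemma mLength_le_of_equiv (e : M ≃ₗ[R] M₂) : mLength R M ≤ mLength R M₂ := by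
  refine iSup_le fun c => ?_
  exact le_iSup_of_le (c.map _ (Submodule.orderIsoMapComap e).strictMono) le_rfl

lemma mLength_congr (e : M ≃ₗ[R] M₂) : mLength R M = mLength R M₂ :=
  le_antisymm (mLength_le_of_equiv e) (mLength_le_of_equiv e.symm)

lemma exists_two_chains {α β : Type*} [PartialOrder α] [PartialOrder β] :
    ∀ (n : ℕ) (f : Fin (n+1) → α) (g : Fin (n+1) → β), Monotone f → Monotone g →
    (∀ i : Fin n, f i.castSucc ≠ f i.succ ∨ g i.castSucc ≠ g i.succ) →
    ∃ (p : LTSeries α) (q : LTSeries β), p.last = f (Fin.last n) ∧ q.last = g (Fin.last n) ∧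
      n ≤ p.length + q.length := by
  intro n
  induction n with
  | zero =>
    intro f g _ _ _
    exact ⟨RelSeries.singleton _ (f (Fin.last 0)), RelSeries.singleton _ (g (Fin.last 0)),
      RelSeries.last_singleton _, RelSeries.last_singleton _, by omega⟩
  | succ n ih =>
    intro f g hf hg hstep
    obtain ⟨p, q, hp, hq, hlen⟩ := ih (f ∘ Fin.castSucc) (g ∘ Fin.castSucc)
      (hf.comp Fin.strictMono_castSucc.monotone) (hg.comp Fin.strictMono_castSucc.monotone)
      (fun i => by
        have h := hstep i.castSucc
        simpa only [Function.comp_apply, Fin.succ_castSucc] using h)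
    have hp' : p.last = f (Fin.last n).castSucc := hp
    have hq' : q.last = g (Fin.last n).castSucc := hq
    have hfle := hf (Fin.castSucc_lt_succ (i := Fin.last n)).le
    have hgle := hg (Fin.castSucc_lt_succ (i := Fin.last n)).le
    have hlast : (Fin.last n).succ = Fin.last (n+1) := Fin.succ_last n
    rcases hfle.lt_or_eq with hflt | hfeq
    · rcases hgle.lt_or_eq with hglt | hgeq
      · refine ⟨p.snoc _ (hp' ▸ hflt), q.snoc _ (hq' ▸ hglt), ?_, ?_, ?_⟩
        · rw [RelSeries.last_snoc, hlast]
        · rw [RelSeries.last_snoc, hlast]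
        · show n + 1 ≤ (p.length + 1) + (q.length + 1); omega
      · refine ⟨p.snoc _ (hp' ▸ hflt), q, ?_, ?_, ?_⟩
        · rw [RelSeries.last_snoc, hlast]
        · rw [hq', hgeq, hlast]
        · show n + 1 ≤ (p.length + 1) + q.length; omega
    · rcases hgle.lt_or_eq with hglt | hgeq
      · refine ⟨p, q.snoc _ (hq' ▸ hglt), ?_, ?_, ?_⟩
        · rw [hp', hfeq, hlast]
        · rw [RelSeries.last_snoc, hlast]
        · show n + 1 ≤ p.length + (q.length + 1); omega
      · rcases hstep (Fin.last n) with h | h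
        · exact absurd hfeq h
        · exact absurd hgeq h

lemma mLength_le_add (N : Submodule R M) :
    mLength R M ≤ mLength R ↥N + mLength R (M ⧸ N) := by
  refine iSup_le fun c => ?_
  obtain ⟨p, q, -, -, hlen⟩ := exists_two_chains c.length
    (fun i => Submodule.comap N.subtype (c i)) (fun i => Submodule.map N.mkQ (c i))
    (fun i j h => Submodule.comap_mono (c.monotone h))
    (fun i j h => Submodule.map_mono (c.monotone h))
    (fun i => by
      by_contra hcon
      push_neg at hcon
      obtain ⟨h1, h2⟩ := hcon
      have hlt := c.step i
      have e1 : N ⊓ c i.castSucc = N ⊓ c i.succ := by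
        rw [← Submodule.map_comap_subtype, ← Submodule.map_comap_subtype, h1]
      have e2 : N ⊔ c i.castSucc = N ⊔ c i.succ := by
        rw [← Submodule.comap_map_mkQ, ← Submodule.comap_map_mkQ, h2]
      refine hlt.ne (eq_of_le_of_inf_le_of_sup_le (z := N) hlt.le ?_ ?_)
      · rw [inf_comm _ N, inf_comm _ N, e1]
      · rw [sup_comm _ N, sup_comm _ N, e2])
  calc (c.length : ℕ∞) ≤ (p.length : ℕ∞) + (q.length : ℕ∞) := by exact_mod_cast hlen
    _ ≤ _ := add_le_add (le_iSup_of_le p le_rfl) (le_iSup_of_le q le_rfl)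

lemma add_le_mLength (N : Submodule R M) :
    mLength R ↥N + mLength R (M ⧸ N) ≤ mLength R M := by
  have h1 : Nonempty (LTSeries (Submodule R ↥N)) := ⟨RelSeries.singleton _ ⊥⟩
  have h2 : Nonempty (LTSeries (Submodule R (M ⧸ N))) := ⟨RelSeries.singleton _ ⊥⟩
  rw [mLength, mLength, ENat.iSup_add]
  refine iSup_le fun p => ?_
  rw [ENat.add_iSup]
  refine iSup_le fun q => ?_
  have hmapsm : StrictMono (Submodule.map N.subtype) :=
    Monotone.strictMono_of_injective (fun _ _ h => Submodule.map_mono h)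
      (Submodule.map_injective_of_injective N.injective_subtype)
  have hcomapsm : StrictMono (Submodule.comap N.mkQ) :=
    Monotone.strictMono_of_injective (fun _ _ h => Submodule.comap_mono h)
      (Submodule.comap_injective_of_surjective N.mkQ_surjective)
  set p' := p.map _ hmapsm with hp'
  set q' := q.map _ hcomapsm with hq'
  have hle : p'.last ≤ q'.head := by
    have ha : p'.last ≤ N := by
      rw [hp', LTSeries.last_map]
      exact Submodule.map_subtype_le N p.last
    have hb : N ≤ q'.head := by
      rw [hq', LTSeries.head_map]
      intro z hz
      have : N.mkQ z = 0 := (Submodule.Quotient.mk_eq_zero N).mpr hz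
      show N.mkQ z ∈ q.head
      rw [this]; exact zero_mem _
    exact ha.trans hb
  rcases hle.lt_or_eq with hlt | heq
  · refine le_trans ?_ (le_iSup_of_le (p'.append q' hlt) le_rfl)
    show (p.length : ℕ∞) + (q.length : ℕ∞) ≤ ((p.length + q.length + 1 : ℕ) : ℕ∞)
    push_cast
    exact le_add_right le_rfl
  · refine le_trans ?_ (le_iSup_of_le (p'.smash q' heq) le_rfl)
    show (p.length : ℕ∞) + (q.length : ℕ∞) ≤ ((p.length + q.length : ℕ) : ℕ∞)
    push_cast; exact le_rfl

lemma mLength_add (N : Submodule R M) :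
    mLength R M = mLength R ↥N + mLength R (M ⧸ N) :=
  le_antisymm (mLength_le_add N) (add_le_mLength N)

end LengthTheory

open RingTheory.Sequence IsLocalRing

section Reg
variable {R : Type} [CommRing R] [IsLocalRing R]

lemma pow_mem_max {r : R} (hr : r ∈ maximalIdeal R) {k : ℕ} (hk : 0 < k) :
    r ^ k ∈ maximalIdeal R := by
  obtain ⟨k, rfl⟩ := Nat.exists_eq_succ_of_ne_zero hk.ne'
  rw [pow_succ]
  exact Ideal.mul_mem_left _ _ hr

lemma weaklyRegular_pow_head {M : Type} [AddCommGroup M] [Module R M] [IsNoetherian R M]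
    {r : R} {rs : List R} (hr : r ∈ maximalIdeal R) (hrs : ∀ s ∈ rs, s ∈ maximalIdeal R)
    (h : IsWeaklyRegular M (r :: rs)) (k : ℕ) (hk : 0 < k) :
    IsWeaklyRegular M (r ^ k :: rs) := by
  have hmem : ∀ s ∈ r :: rs, s ∈ maximalIdeal R := by
    intro s hs
    rcases List.mem_cons.mp hs with rfl | hs
    exacts [hr, hrs s hs]
  have h2 : IsWeaklyRegular M (rs ++ [r]) :=
    IsLocalRing.isWeaklyRegular_of_perm_of_subset_maximalIdeal h
      (List.perm_append_singleton r rs).symm hmem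
  rw [isWeaklyRegular_append_iff, isWeaklyRegular_singleton_iff] at h2
  obtain ⟨h3, h4⟩ := h2
  have h5 : IsWeaklyRegular M (rs ++ [r ^ k]) := by
    rw [isWeaklyRegular_append_iff, isWeaklyRegular_singleton_iff]
    exact ⟨h3, h4.pow k⟩
  refine IsLocalRing.isWeaklyRegular_of_perm_of_subset_maximalIdeal h5
    (List.perm_append_singleton _ _) ?_
  intro s hs
  rcases List.mem_append.mp hs with hs | hs
  · exact hrs s hs
  · rw [List.mem_singleton.mp hs]
    exact pow_mem_max hr hk

lemma weaklyRegular_pow {d : ℕ} :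
    ∀ (M : Type) [AddCommGroup M] [Module R M] [IsNoetherian R M]
    (x : Fin d → R), (∀ j, x j ∈ maximalIdeal R) →
    IsWeaklyRegular M (List.ofFn x) → ∀ (b : Fin d → ℕ), (∀ j, 0 < b j) →
    IsWeaklyRegular M (List.ofFn fun j => x j ^ b j) := by
  induction d with
  | zero => intro M _ _ _ x _ _ b _; simpa [List.ofFn_zero] using IsWeaklyRegular.nil R M
  | succ n ih =>
    intro M _ _ _ x hx h b hb
    rw [List.ofFn_succ] at h ⊢
    have hmemtail : ∀ s ∈ List.ofFn fun i : Fin n => x i.succ, s ∈ maximalIdeal R := by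
      intro s hs
      obtain ⟨j, rfl⟩ := List.mem_ofFn.mp hs
      exact hx _
    have h1 : IsWeaklyRegular M (x 0 ^ b 0 :: List.ofFn fun i : Fin n => x (Fin.succ i)) :=
      weaklyRegular_pow_head (hx 0) hmemtail h (b 0) (hb 0)
    rw [isWeaklyRegular_cons_iff] at h1 ⊢
    refine ⟨h1.1, ?_⟩
    exact ih _ (fun j => x j.succ) (fun j => hx _) h1.2 (fun j => b j.succ) (fun j => hb _)

lemma reg_mod_rest [IsNoetherianRing R] {d : ℕ} (x : Fin d → R)
    (hx : ∀ j, x j ∈ maximalIdeal R) (hreg : IsWeaklyRegular R (List.ofFn x))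
    (a : Fin d → ℕ) (ha : ∀ j, 0 < a j) (i : Fin d) :
    IsSMulRegular
      (R ⧸ (Ideal.span ((fun j => x j ^ a j) '' {i}ᶜ) • ⊤ : Submodule R R))
      (x i ^ a i) := by
  classical
  set g : Fin d → R := fun j => x j ^ a j with hg
  have hw : IsWeaklyRegular R (List.ofFn g) := weaklyRegular_pow R x hx hreg a ha
  set L : List R := ((List.finRange d).filter (· != i)).map g with hL
  have hperm : (List.ofFn g).Perm (L ++ [g i]) := by
    rw [List.ofFn_eq_map]
    have h1 : (List.finRange d).Perm (i :: (List.finRange d).erase i) :=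
      List.perm_cons_erase (List.mem_finRange i)
    rw [(List.nodup_finRange d).erase_eq_filter i] at h1
    exact ((h1.map g).trans (List.perm_append_singleton _ _).symm)
  have hmem : ∀ s ∈ List.ofFn g, s ∈ maximalIdeal R := by
    intro s hs
    obtain ⟨j, rfl⟩ := List.mem_ofFn.mp hs
    exact pow_mem_max (hx j) (ha j)
  have h2 := IsLocalRing.isWeaklyRegular_of_perm_of_subset_maximalIdeal hw hperm hmem
  rw [isWeaklyRegular_append_iff, isWeaklyRegular_singleton_iff] at h2
  have h3 := h2.2
  have hLK : Ideal.ofList L = Ideal.span (g '' {i}ᶜ) := by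
    apply congrArg Ideal.span
    ext s
    simp only [hL, Set.mem_setOf_eq, List.mem_map, List.mem_filter, List.mem_finRange,
      true_and, Set.mem_image, Set.mem_compl_iff, Set.mem_singleton_iff, bne_iff_ne]
  rw [hLK] at h3
  exact h3
end Reg

section Step
open RingTheory.Sequence IsLocalRing

variable {R : Type} [CommRing R] [IsLocalRing R] [IsNoetherianRing R]

lemma step_lemma {d : ℕ} (x : Fin d → R) (hx : ∀ j, x j ∈ maximalIdeal R)
    (hreg : IsWeaklyRegular R (List.ofFn x)) (a : Fin d → ℕ) (ha : ∀ j, 0 < a j) (i : Fin d) :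
    mLength R (R ⧸ Ideal.span (Set.range fun j => x j ^ Function.update a i (a i + 1) j)) =
      mLength R (R ⧸ Ideal.span (Set.range fun j => x j ^ a j)) +
      mLength R (R ⧸ Ideal.span (Set.range fun j => x j ^ Function.update a i 1 j)) := by
  classical
  set K : Ideal R := Ideal.span ((fun j => x j ^ a j) '' {i}ᶜ) with hK
  have hsplit : ∀ s : ℕ, Ideal.span (Set.range fun j => x j ^ Function.update a i s j)
      = K ⊔ Ideal.span {x i ^ s} := by
    intro s
    rw [hK]
    have hset : (Set.range fun j => x j ^ Function.update a i s j) =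
        ((fun j => x j ^ a j) '' {i}ᶜ) ∪ {x i ^ s} := by
      ext r
      constructor
      · rintro ⟨j, rfl⟩
        rcases eq_or_ne j i with rfl | hj
        · right
          simp only [Function.update_self]
          rfl
        · left
          exact ⟨j, hj, by simp only [Function.update_of_ne hj]⟩
      · rintro (⟨j, hj, rfl⟩ | h)
        · exact ⟨j, by simp only [Function.update_of_ne hj]⟩
        · exact ⟨i, by simp only [Function.update_self]; exact h.symm⟩
    rw [hset, Ideal.span_union]
  set Ia : Ideal R := Ideal.span (Set.range fun j => x j ^ a j) with hIadef
  set A : Ideal R := Ideal.span (Set.range fun j => x j ^ Function.update a i (a i + 1) j)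
    with hAdef
  have hAeq : A = K ⊔ Ideal.span {x i ^ (a i + 1)} := hsplit (a i + 1)
  have hIa : Ia = K ⊔ Ideal.span {x i ^ a i} := by
    have h := hsplit (a i)
    rwa [Function.update_eq_self] at h
  have hsingle : Ideal.span {x i ^ (a i + 1)} ≤ Ideal.span {x i ^ a i} :=
    Ideal.span_singleton_le_span_singleton.mpr (pow_dvd_pow (x i) (Nat.le_succ _))
  have hsub : A ≤ Ia := by
    rw [hAeq, hIa]
    exact sup_le_sup_left hsingle K
  have hC : Ideal.span (Set.range fun j => x j ^ Function.update a i 1 j)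
      = K ⊔ Ideal.span {x i} := by
    have h := hsplit 1
    rwa [pow_one] at h
  -- regularity
  have hregK : IsSMulRegular (R ⧸ (K • ⊤ : Submodule R R)) (x i ^ a i) :=
    reg_mod_rest x hx hreg a ha i
  have hKtop : (K • ⊤ : Submodule R R) = K := by
    apply le_antisymm
    · refine Submodule.smul_le.mpr ?_
      intro r hr m _
      exact Ideal.mul_mem_right m K hr
    · intro r hr
      have h : r • (1 : R) ∈ K • (⊤ : Submodule R R) :=
        Submodule.smul_mem_smul hr Submodule.mem_top
      simpa using h
  rw [hKtop] at hregK
  have hker : ∀ r : R, x i ^ a i * r ∈ A → r ∈ K ⊔ Ideal.span {x i} := by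
    intro r hr
    rw [hAeq] at hr
    obtain ⟨k, hk, z, hz, hsum⟩ := Submodule.mem_sup.mp hr
    obtain ⟨c, hc⟩ := Ideal.mem_span_singleton'.mp hz
    have hmem : x i ^ a i * (r - c * x i) ∈ K := by
      have he : x i ^ a i * (r - c * x i) = k := by
        linear_combination -hsum - hc
      rw [he]; exact hk
    have hsubm : r - c * x i ∈ K := by
      have h0 : (x i ^ a i) • (Submodule.Quotient.mk (r - c * x i) :
          R ⧸ (K : Submodule R R)) = (x i ^ a i) • (Submodule.Quotient.mk 0 :
          R ⧸ (K : Submodule R R)) := by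
        rw [← Submodule.Quotient.mk_smul, ← Submodule.Quotient.mk_smul,
          Submodule.Quotient.eq]
        simpa [smul_eq_mul] using hmem
      have h1 := hregK h0
      rw [Submodule.Quotient.eq] at h1
      simpa using h1
    refine Submodule.mem_sup.mpr ⟨r - c * x i, hsubm, c * x i,
      Ideal.mem_span_singleton'.mpr ⟨c, rfl⟩, by ring⟩
  -- the map g
  set g : R →ₗ[R] R ⧸ A := (Submodule.mkQ A) ∘ₗ (LinearMap.lsmul R R (x i ^ a i)) with hgdef
  have hgker : LinearMap.ker g = K ⊔ Ideal.span {x i} := by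
    ext r
    simp only [hgdef, LinearMap.mem_ker, LinearMap.coe_comp, Function.comp_apply,
      LinearMap.lsmul_apply, smul_eq_mul, Submodule.mkQ_apply, Submodule.Quotient.mk_eq_zero]
    constructor
    · exact hker r
    · intro hrC
      obtain ⟨k, hk, z, hz, hsum⟩ := Submodule.mem_sup.mp hrC
      obtain ⟨c, hc⟩ := Ideal.mem_span_singleton'.mp hz
      rw [hAeq]
      refine Submodule.mem_sup.mpr ⟨x i ^ a i * k, Ideal.mul_mem_left _ _ hk,
        c * x i ^ (a i + 1), Ideal.mem_span_singleton'.mpr ⟨c, rfl⟩, ?_⟩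
      linear_combination (x i ^ a i) * hsum + (x i ^ a i) * hc
  have hrange : LinearMap.range g = Submodule.map A.mkQ Ia := by
    have h1 : Ia = A ⊔ Ideal.span {x i ^ a i} := by
      rw [hIa, hAeq, sup_assoc, sup_eq_right.mpr hsingle]
    have hbot : Submodule.map A.mkQ A = ⊥ := Submodule.mkQ_map_self A
    rw [h1, Submodule.map_sup, hbot, bot_sup_eq]
    ext y
    simp only [hgdef, LinearMap.mem_range, LinearMap.coe_comp, Function.comp_apply,
      LinearMap.lsmul_apply, smul_eq_mul, Submodule.mkQ_apply, Submodule.mem_map]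
    constructor
    · rintro ⟨r, rfl⟩
      exact ⟨x i ^ a i * r, Ideal.mem_span_singleton'.mpr ⟨r, mul_comm _ _⟩, rfl⟩
    · rintro ⟨z, hz, rfl⟩
      obtain ⟨c, rfl⟩ := Ideal.mem_span_singleton'.mp hz
      exact ⟨c, by rw [mul_comm]⟩
  have e2 : (R ⧸ (K ⊔ Ideal.span {x i} : Ideal R)) ≃ₗ[R] ↥(Submodule.map A.mkQ Ia) :=
    (Submodule.quotEquivOfEq _ _ hgker.symm).trans
      (g.quotKerEquivRange.trans (LinearEquiv.ofEq _ _ hrange))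
  have e1 : ((R ⧸ A) ⧸ (Submodule.map A.mkQ Ia)) ≃ₗ[R] R ⧸ Ia :=
    Submodule.quotientQuotientEquivQuotient A Ia hsub
  calc mLength R (R ⧸ A)
      = mLength R ↥(Submodule.map A.mkQ Ia) +
        mLength R ((R ⧸ A) ⧸ (Submodule.map A.mkQ Ia)) := mLength_add _
    _ = mLength R (R ⧸ (K ⊔ Ideal.span {x i} : Ideal R)) + mLength R (R ⧸ Ia) := by
        rw [mLength_congr e1, ← mLength_congr e2]
    _ = mLength R (R ⧸ Ia) +
        mLength R (R ⧸ Ideal.span (Set.range fun j => x j ^ Function.update a i 1 j)) := by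
        rw [hC, add_comm]

end Step


/-- If `x = x_1, …, x_d` is an `R`-regular sequence with `ℓ(R/(x)) < ∞`,
then `ℓ(R/(x_1^{a_1}, …, x_d^{a_d})) = a_1 ⋯ a_d · ℓ(R/(x))` for all positive integers
`a_1, …, a_d`; in particular `ℓ(R/(x_1^q, …, x_d^q)) = q^d · ℓ(R/(x))` for any `q > 0`. -/
theorem stmt_16 (R : Type) [CommRing R] [IsNoetherianRing R] [IsLocalRing R]
    (d : ℕ) (x : Fin d → R)
    (hreg : RingTheory.Sequence.IsRegular R (List.ofFn x))
    (hfl : IsFiniteLength R (R ⧸ Ideal.span (Set.range x))) :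
    (∀ a : Fin d → ℕ, (∀ j, 0 < a j) →
        mLength R (R ⧸ Ideal.span (Set.range fun j => x j ^ a j)) =
          (∏ j, ((a j : ℕ∞))) * mLength R (R ⧸ Ideal.span (Set.range x))) ∧
      ∀ q : ℕ, 0 < q →
        mLength R (R ⧸ Ideal.span (Set.range fun j => x j ^ q)) =
          ((q : ℕ∞)) ^ d * mLength R (R ⧸ Ideal.span (Set.range x)) := by
  classical
  have hofList : Ideal.ofList (List.ofFn x) = Ideal.span (Set.range x) := by
    apply congrArg Ideal.span
    ext r
    simp [List.mem_ofFn]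
  have hx : ∀ j, x j ∈ maximalIdeal R := by
    intro j
    refine IsLocalRing.le_maximalIdeal ?_ (Ideal.subset_span (Set.mem_range_self j))
    intro htop
    refine hreg.top_ne_smul ?_
    rw [hofList, htop, Submodule.top_smul]
  have hweak := hreg.toIsWeaklyRegular
  have main : ∀ n (a : Fin d → ℕ), (∀ j, 0 < a j) → (∑ j, a j) = n →
      mLength R (R ⧸ Ideal.span (Set.range fun j => x j ^ a j)) =
        (∏ j, ((a j : ℕ∞))) * mLength R (R ⧸ Ideal.span (Set.range x)) := by
    intro n
    induction n using Nat.strong_induction_on with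
    | _ n ih =>
      intro a ha hsum
      by_cases hall : ∀ j, a j = 1
      · have h1 : (fun j => x j ^ a j) = x := funext fun j => by rw [hall j, pow_one]
        rw [h1, Finset.prod_eq_one (fun j _ => by rw [hall j, Nat.cast_one]), one_mul]
      · push_neg at hall
        obtain ⟨i, hi⟩ := hall
        have h2 : 2 ≤ a i := by have := ha i; omega
        set b := Function.update a i (a i - 1) with hb
        have hbi : b i = a i - 1 := Function.update_self i _ a
        have hbpos : ∀ j, 0 < b j := by
          intro j
          rcases eq_or_ne j i with rfl | hj
          · rw [hbi]; omega
          · rw [hb, Function.update_of_ne hj]; exact ha j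
        have hba : Function.update b i (b i + 1) = a := by
          funext j
          rcases eq_or_ne j i with rfl | hj
          · rw [Function.update_self, hbi]; omega
          · rw [Function.update_of_ne hj, hb, Function.update_of_ne hj]
        have hb1 : Function.update b i 1 = Function.update a i 1 := by
          rw [hb, Function.update_idem]
        have hstep := step_lemma x hx hweak b hbpos i
        rw [hba, hb1] at hstep
        -- sums
        have hsum_split : ∑ j, a j = a i + ∑ j ∈ Finset.univ.erase i, a j :=
          Finset.add_sum_erase _ a (Finset.mem_univ i) |>.symm
        have hsb : ∑ j, b j = (a i - 1) + ∑ j ∈ Finset.univ.erase i, a j := by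
          rw [hb, Finset.sum_update_of_mem (Finset.mem_univ i),
            Finset.sdiff_singleton_eq_erase]
        have hsc : ∑ j, Function.update a i 1 j = 1 + ∑ j ∈ Finset.univ.erase i, a j := by
          rw [Finset.sum_update_of_mem (Finset.mem_univ i),
            Finset.sdiff_singleton_eq_erase]
        have hlt1 : ∑ j, b j < n := by rw [hsb]; omega
        have hlt2 : ∑ j, Function.update a i 1 j < n := by rw [hsc]; omega
        rw [hstep, ih _ hlt1 b hbpos rfl, ih _ hlt2 _ (fun j => by
          rcases eq_or_ne j i with rfl | hj
          · rw [Function.update_self]; omega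
          · rw [Function.update_of_ne hj]; exact ha j) rfl]
        -- arithmetic
        have hP : (∏ j, b j) + (∏ j, Function.update a i 1 j) = ∏ j, a j := by
          rw [hb, Finset.prod_update_of_mem (Finset.mem_univ i),
            Finset.prod_update_of_mem (Finset.mem_univ i), ← add_mul,
            Nat.sub_add_cancel (by omega : 1 ≤ a i), Finset.sdiff_singleton_eq_erase,
            Finset.mul_prod_erase Finset.univ a (Finset.mem_univ i)]
        rw [← Nat.cast_prod, ← Nat.cast_prod, ← Nat.cast_prod, ← add_mul, ← Nat.cast_add, hP]
  constructor
  · intro a ha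
    exact main _ a ha rfl
  · intro q hq
    have h := main _ (fun _ => q) (fun _ => hq) rfl
    rwa [Finset.prod_const, Finset.card_univ, Fintype.card_fin] at h

end
end
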